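/- arXiv:1809.01841 — 5 statements merged into one kernel-verified Lean document; each statement's English description precedes it below -/
import Mathlib

section
/- Let f : ℤ → ℂ be periodic with period q and suppose ∑_{a=1}^{q} f(a) = 0. Then the series ∑_{n=1}^{∞} f(n)/n converges and equals −∑_{x=1}^{q-1} f̂(x) log(1 − ζ_q^x), where f̂(x) = (1/q)∑_{a=1}^{q} f(a) ζ_q^{-ax} and log is the principal branch. -/
open Finset Filter Topology

lemma aux_tendsto_boundary {z : ℂ} (hz : ‖z‖ = 1) (hz1 : z ≠ 1) :
    Tendsto (fun N : ℕ => ∑ n ∈ Finset.Icc 1 N, z ^ n / n) atTop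
      (𝓝 (-Complex.log (1 - z))) := by
  have hne : z - 1 ≠ 0 := sub_ne_zero.mpr hz1
  set g : ℕ → ℂ := fun i => z ^ (i + 1) / (i + 1) with hgdef
  -- boundedness of geometric partial sums
  have hb : ∀ n, ‖∑ i ∈ range n, z ^ (i + 1)‖ ≤ 2 / ‖z - 1‖ := by
    intro n
    have h1 : ∑ i ∈ range n, z ^ (i + 1) = (∑ i ∈ range n, z ^ i) * z := by
      rw [Finset.sum_mul]; exact Finset.sum_congr rfl fun i _ => (pow_succ z i).symm
    rw [h1, geom_sum_eq hz1]
    rw [norm_mul, norm_div, hz, mul_one]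
    apply div_le_div_of_nonneg_right ?_ (by positivity) |>.trans_eq rfl
    · calc ‖z ^ n - 1‖ ≤ ‖z ^ n‖ + ‖(1 : ℂ)‖ := norm_sub_le _ _
        _ = 2 := by rw [norm_pow, hz]; norm_num
  -- Dirichlet test
  have hanti : Antitone (fun n : ℕ => ((n : ℝ) + 1)⁻¹) := by
    intro m n hmn
    have h : (m : ℝ) + 1 ≤ (n : ℝ) + 1 := by exact_mod_cast Nat.succ_le_succ hmn
    exact inv_anti₀ (by positivity) h
  have h0 : Tendsto (fun n : ℕ => ((n : ℝ) + 1)⁻¹) atTop (𝓝 0) := by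
    simpa [one_div] using tendsto_one_div_add_atTop_nhds_zero_nat (𝕜 := ℝ)
  have hcau : CauchySeq fun n => ∑ i ∈ range n, ((i : ℝ) + 1)⁻¹ • z ^ (i + 1) :=
    hanti.cauchySeq_series_mul_of_tendsto_zero_of_bounded h0 hb
  have hgsmul : ∀ i : ℕ, ((i : ℝ) + 1)⁻¹ • z ^ (i + 1) = g i := by
    intro i
    rw [hgdef]
    simp only [Complex.real_smul, div_eq_inv_mul]
    push_cast
    ring
  obtain ⟨l, hl⟩ := cauchySeq_tendsto_of_complete hcau
  simp_rw [hgsmul] at hl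
  -- Abel's limit theorem
  have habel := Complex.tendsto_tsum_powerSeries_nhdsWithin_lt hl
  rw [Filter.tendsto_map'_iff] at habel
  -- z.re < 1
  have hnormsq : z.re ^ 2 + z.im ^ 2 = 1 := by
    have h := Complex.sq_norm z
    rw [Complex.normSq_apply] at h
    have : ‖z‖ = 1 := hz
    nlinarith [this]
  have hre : z.re < 1 := by
    rcases lt_or_ge z.re 1 with h | h
    · exact h
    · exfalso
      apply hz1
      have him : z.im = 0 := by nlinarith
      have hre1 : z.re = 1 := by nlinarith
      exact Complex.ext hre1 him
  have hslit : (1 - z) ∈ Complex.slitPlane := by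
    rw [Complex.mem_slitPlane_iff]
    left
    simp only [Complex.sub_re, Complex.one_re]
    linarith
  -- continuity of the log expression
  have h1 : Tendsto (fun x : ℝ => (x : ℂ)) (𝓝[<] 1) (𝓝 (1 : ℂ)) :=
    (Complex.continuous_ofReal.tendsto 1).mono_left nhdsWithin_le_nhds
  have h2 : Tendsto (fun x : ℝ => 1 - (x : ℂ) * z) (𝓝[<] 1) (𝓝 (1 - z)) := by
    have := (h1.mul_const z).const_sub 1
    simpa using this
  have h3 : Tendsto (fun x : ℝ => Complex.log (1 - (x : ℂ) * z)) (𝓝[<] 1)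
      (𝓝 (Complex.log (1 - z))) :=
    (continuousAt_clog hslit).tendsto.comp h2
  have h4 : Tendsto (fun x : ℝ => ((x : ℂ))⁻¹) (𝓝[<] 1) (𝓝 1) := by
    simpa using h1.inv₀ one_ne_zero
  have hcont : Tendsto (fun x : ℝ => -Complex.log (1 - (x : ℂ) * z) * ((x : ℂ))⁻¹)
      (𝓝[<] (1:ℝ)) (𝓝 (-Complex.log (1 - z))) := by
    simpa using h3.neg.mul h4
  -- eventual equality
  have heq : ∀ᶠ x : ℝ in 𝓝[<] 1, (∑' n, g n * (x : ℂ) ^ n)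
      = -Complex.log (1 - (x : ℂ) * z) * ((x : ℂ))⁻¹ := by
    filter_upwards [Ioo_mem_nhdsLT_of_mem (by norm_num : (1:ℝ) ∈ Set.Ioc (0:ℝ) 1)] with x hx
    obtain ⟨hx0, hx1⟩ := hx
    have hx0' : (x : ℂ) ≠ 0 := by exact_mod_cast hx0.ne'
    have hxz : ‖(x : ℂ) * z‖ < 1 := by
      rw [norm_mul, hz, mul_one, Complex.norm_real, Real.norm_eq_abs, abs_of_pos hx0]
      exact hx1
    have hs := Complex.hasSum_taylorSeries_neg_log hxz
    have hs' : HasSum (fun n : ℕ => ((x : ℂ) * z) ^ n / n * ((x:ℂ))⁻¹)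
        (-Complex.log (1 - (x : ℂ) * z) * ((x:ℂ))⁻¹) := hs.mul_right _
    have hs'' : HasSum (fun n : ℕ => ((x : ℂ) * z) ^ (n + 1) / (n + 1) * ((x:ℂ))⁻¹)
        (-Complex.log (1 - (x : ℂ) * z) * ((x:ℂ))⁻¹) := by
      have := (hasSum_nat_add_iff' (f := fun n : ℕ => ((x : ℂ) * z) ^ n / n * ((x:ℂ))⁻¹) 1).mpr hs'
      simpa using this
    have hterm : ∀ n : ℕ, ((x : ℂ) * z) ^ (n + 1) / (n + 1) * ((x:ℂ))⁻¹
        = g n * (x : ℂ) ^ n := by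
      intro n
      have hxx : ((x:ℂ)) ^ (n + 1) * ((x:ℂ))⁻¹ = (x:ℂ) ^ n := by
        rw [pow_succ, mul_assoc, mul_inv_cancel₀ hx0', mul_one]
      calc ((x : ℂ) * z) ^ (n + 1) / (n + 1) * ((x:ℂ))⁻¹
          = ((x:ℂ) ^ (n + 1) * ((x:ℂ))⁻¹) * (z ^ (n + 1) / (n + 1)) := by
            rw [mul_pow]; ring
        _ = g n * (x : ℂ) ^ n := by rw [hxx, hgdef]; ring
    rw [← hs''.tsum_eq]
    exact tsum_congr fun n => (hterm n).symm
  have hlim : l = -Complex.log (1 - z) :=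
    tendsto_nhds_unique (habel.congr' heq) hcont
  rw [← hlim]
  convert hl using 1
  funext N
  rw [← Finset.Ico_add_one_right_eq_Icc, Finset.sum_Ico_eq_sum_range]
  simp only [Nat.add_sub_cancel, Nat.succ_sub_one]
  exact Finset.sum_congr rfl fun i _ => by rw [hgdef]; simp [add_comm 1 i]

theorem L_one_as_linear_form_in_logs (q : ℕ) (hq : 0 < q) (f : ℤ → ℂ)
    (hper : ∀ n : ℤ, f (n + q) = f n)
    (hsum : ∑ a ∈ Finset.Icc 1 q, f a = 0) :
    Tendsto (fun N : ℕ => ∑ n ∈ Finset.Icc 1 N, f n / n) atTop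
      (nhds (- ∑ x ∈ Finset.Icc 1 (q - 1),
        ((1 / (q : ℂ)) * ∑ a ∈ Finset.Icc 1 q,
          f a * Complex.exp (2 * Real.pi * Complex.I / q) ^ (-(a : ℤ) * x)) *
        Complex.log (1 - Complex.exp (2 * Real.pi * Complex.I / q) ^ (x : ℕ)))) := by
  set ζ : ℂ := Complex.exp (2 * Real.pi * Complex.I / q) with hζdef
  have hζ : IsPrimitiveRoot ζ q := Complex.isPrimitiveRoot_exp q hq.ne'
  have hζ0 : ζ ≠ 0 := Complex.exp_ne_zero _
  have hq0 : (q : ℂ) ≠ 0 := Nat.cast_ne_zero.mpr hq.ne'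
  set c : ℕ → ℂ := fun x => (1 / (q : ℂ)) * ∑ a ∈ Finset.Icc 1 q,
    f a * ζ ^ (-(a : ℤ) * x) with hcdef
  -- periodicity
  have hp : Function.Periodic f (q : ℤ) := hper
  have hfcong : ∀ m n : ℤ, (q : ℤ) ∣ m - n → f m = f n := by
    rintro m n ⟨k, hk⟩
    have h := (hp.int_mul k) n
    have hm : m = n + k * (q : ℤ) := by linear_combination hk
    rw [hm]
    exact h
  -- c 0 = 0
  have hc0 : c 0 = 0 := by
    rw [hcdef]
    simp only [Nat.cast_zero, mul_zero, zpow_zero, mul_one]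
    rw [hsum, mul_zero]
  -- geometric sums of roots of unity
  have hgeom : ∀ k : ℤ, ∑ x ∈ Finset.range q, (ζ ^ k) ^ x
      = if (q : ℤ) ∣ k then (q : ℂ) else 0 := by
    intro k
    by_cases hdvd : (q : ℤ) ∣ k
    · rw [if_pos hdvd]
      have h1 : ζ ^ k = 1 := (hζ.zpow_eq_one_iff_dvd k).mpr hdvd
      simp [h1]
    · rw [if_neg hdvd]
      have h1 : ζ ^ k ≠ 1 := fun h => hdvd ((hζ.zpow_eq_one_iff_dvd k).mp h)
      rw [geom_sum_eq h1]
      have h2 : (ζ ^ k) ^ q = 1 := by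
        rw [← zpow_natCast (ζ ^ k) q, ← zpow_mul, mul_comm, zpow_mul, zpow_natCast,
          hζ.pow_eq_one, one_zpow]
      rw [h2, sub_self, zero_div]
  -- Fourier inversion
  have hinv : ∀ n : ℕ, f n = ∑ x ∈ Finset.range q, c x * (ζ ^ x) ^ n := by
    intro n
    have hterm : ∀ x, c x * (ζ ^ x) ^ n
        = (1 / (q : ℂ)) * ∑ a ∈ Finset.Icc 1 q, f a * (ζ ^ ((n : ℤ) - a)) ^ x := by
      intro x
      rw [hcdef]
      rw [mul_assoc]
      congr 1
      rw [Finset.sum_mul]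
      refine Finset.sum_congr rfl fun a _ => ?_
      rw [mul_assoc]
      congr 1
      rw [← pow_mul, ← zpow_natCast ζ (x * n), ← zpow_add₀ hζ0,
        ← zpow_natCast (ζ ^ ((n : ℤ) - (a : ℤ))) x, ← zpow_mul]
      congr 1
      push_cast
      ring
    rw [Finset.sum_congr rfl fun x _ => hterm x, ← Finset.mul_sum, Finset.sum_comm]
    have hD : ∀ a ∈ Finset.Icc 1 q, ∑ x ∈ Finset.range q, f a * (ζ ^ ((n : ℤ) - a)) ^ x
        = f a * (if (q : ℤ) ∣ ((n : ℤ) - a) then (q : ℂ) else 0) := by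
      intro a _
      rw [← Finset.mul_sum, hgeom]
    rw [Finset.sum_congr rfl hD]
    -- the unique representative
    set a₀ : ℕ := if n % q = 0 then q else n % q with ha₀def
    have hmod : n % q < q := Nat.mod_lt _ hq
    have ha₀mem : a₀ ∈ Finset.Icc 1 q := by
      rw [ha₀def]
      split_ifs with h <;> simp only [Finset.mem_Icc] <;> omega
    have hdvd0 : (q : ℤ) ∣ (n : ℤ) - (n % q : ℕ) := by
      refine ⟨(n / q : ℕ), ?_⟩
      push_cast
      have := Nat.mod_add_div n q
      push_cast at this
      linarith
    have ha₀dvd : (q : ℤ) ∣ (n : ℤ) - a₀ := by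
      rw [ha₀def]
      split_ifs with h
      · have hq' : (q : ℤ) ∣ (n : ℤ) := by
          have : (n % q : ℕ) = 0 := h
          have h2 := hdvd0
          rw [this] at h2
          simpa using h2
        exact dvd_sub hq' dvd_rfl
      · exact hdvd0
    rw [Finset.sum_eq_single_of_mem a₀ ha₀mem ?uniq]
    · rw [if_pos ha₀dvd]
      have hfa : f a₀ = f n := hfcong _ _ (by
        rw [show (a₀ : ℤ) - n = -((n : ℤ) - a₀) by ring]
        exact dvd_neg.mpr ha₀dvd)
      rw [hfa]
      field_simp
    case uniq =>
      intro a ha hne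
      rw [if_neg, mul_zero]
      intro hdvd
      have hd : (q : ℤ) ∣ (a : ℤ) - a₀ := by
        have := dvd_sub ha₀dvd hdvd
        simpa using this
      have habs : ((a : ℤ) - a₀) = 0 := by
        refine Int.eq_zero_of_abs_lt_dvd hd ?_
        rw [Finset.mem_Icc] at ha ha₀mem
        rw [abs_lt]
        constructor <;> [skip; skip] <;> push_cast <;> omega
      apply hne
      omega
  -- swap sums
  have hswap : ∀ N : ℕ, ∑ n ∈ Finset.Icc 1 N, f n / n
      = ∑ x ∈ Finset.range q, c x * ∑ n ∈ Finset.Icc 1 N, (ζ ^ x) ^ n / n := by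
    intro N
    rw [Finset.sum_congr rfl fun n _ => by rw [hinv n, Finset.sum_div]]
    rw [Finset.sum_comm]
    refine Finset.sum_congr rfl fun x _ => ?_
    rw [Finset.mul_sum]
    exact Finset.sum_congr rfl fun n _ => (mul_div_assoc _ _ _)
  -- per-term limits
  have hlim : ∀ x ∈ Finset.range q,
      Tendsto (fun N : ℕ => c x * ∑ n ∈ Finset.Icc 1 N, (ζ ^ x) ^ n / n)
        atTop (𝓝 (c x * (-Complex.log (1 - ζ ^ x)))) := by
    intro x hx
    rcases Nat.eq_zero_or_pos x with rfl | hxpos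
    · simp only [hc0, zero_mul]
      exact tendsto_const_nhds
    · have hxq : x < q := Finset.mem_range.mp hx
      have hne1 : ζ ^ x ≠ 1 := by
        intro h
        have hdvd := (hζ.pow_eq_one_iff_dvd x).mp h
        have := Nat.le_of_dvd hxpos hdvd
        omega
      have hnormζ : ‖ζ‖ = 1 := by
        rw [hζdef, Complex.norm_exp]
        norm_num [Complex.div_re, Complex.mul_re, Complex.mul_im, Complex.I_re, Complex.I_im]
      have hnorm : ‖ζ ^ x‖ = 1 := by rw [norm_pow, hnormζ, one_pow]
      exact (aux_tendsto_boundary hnorm hne1).const_mul (c x)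
  have hfinal : Tendsto (fun N : ℕ => ∑ x ∈ Finset.range q,
      c x * ∑ n ∈ Finset.Icc 1 N, (ζ ^ x) ^ n / n) atTop
      (𝓝 (∑ x ∈ Finset.range q, c x * (-Complex.log (1 - ζ ^ x)))) :=
    tendsto_finset_sum _ hlim
  have hT : (- ∑ x ∈ Finset.Icc 1 (q - 1),
        ((1 / (q : ℂ)) * ∑ a ∈ Finset.Icc 1 q, f a * ζ ^ (-(a : ℤ) * x)) *
        Complex.log (1 - ζ ^ (x : ℕ)))
      = ∑ x ∈ Finset.range q, c x * (-Complex.log (1 - ζ ^ x)) := by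
    have hcx : ∀ x : ℕ, ((1 / (q : ℂ)) * ∑ a ∈ Finset.Icc 1 q, f a * ζ ^ (-(a : ℤ) * x)) = c x :=
      fun x => rfl
    have hr : Finset.range q = insert 0 (Finset.Icc 1 (q - 1)) := by
      ext t
      simp only [Finset.mem_range, Finset.mem_insert, Finset.mem_Icc]
      omega
    rw [hr, Finset.sum_insert (by simp)]
    rw [hc0, zero_mul, zero_add]
    rw [← Finset.sum_neg_distrib]
    exact Finset.sum_congr rfl fun x _ => by rw [hcx x]; ring
  rw [hT]
  exact hfinal.congr fun N => (hswap N).symm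
end

section
/- Let f be an odd algebraic-valued arithmetical function, periodic with period q, such that L(1,f) = ∑_{n≥1} f(n)/n converges. Then L(1,f) = −(iπ/q) ∑_{x=1}^{q-1} x f̂(x). In particular, L(1,f) = 0 if and only if ∑_{x=1}^{q-1} x f̂(x) = 0. -/
open Finset Filter Complex Topology

section Aux

-- boundary convergence of the log series
theorem tendsto_sum_pow_div_nat (w : ℂ) (hw : ‖w‖ = 1) (hw1 : w ≠ 1) :
    Tendsto (fun N : ℕ => ∑ n ∈ range N, w ^ n / n) atTop (𝓝 (-Complex.log (1 - w))) := by
  have hw0 : (1 : ℂ) - w ≠ 0 := sub_ne_zero.mpr (Ne.symm hw1)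
  -- partial sums of w^(n+1) are bounded
  have hbd : ∀ n : ℕ, ‖∑ i ∈ range n, w ^ (i + 1)‖ ≤ 2 / ‖1 - w‖ := by
    intro n
    have : ∑ i ∈ range n, w ^ (i + 1) = w * ((w ^ n - 1) / (w - 1)) := by
      rw [← geom_sum_eq hw1, Finset.mul_sum]
      exact Finset.sum_congr rfl fun i _ => by ring
    rw [this]
    rw [norm_mul, norm_div, hw, one_mul]
    rw [show w - 1 = -(1 - w) by ring, norm_neg]
    gcongr
    calc ‖w ^ n - 1‖ ≤ ‖w ^ n‖ + ‖(1:ℂ)‖ := norm_sub_le _ _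
      _ = 2 := by rw [norm_pow, hw]; norm_num
  -- Cauchy
  have hc : CauchySeq fun N : ℕ => ∑ n ∈ range N, w ^ n / n := by
    rw [← cauchySeq_shift 1]
    have : ∀ N : ℕ, ∑ n ∈ range (N + 1), w ^ n / n
        = ∑ n ∈ range N, (1 / (n + 1) : ℝ) • w ^ (n + 1) := by
      intro N
      rw [Finset.sum_range_succ' (fun n => w ^ n / n)]
      simp [real_smul, div_eq_inv_mul, mul_comm]
    simp only [this]
    have hanti : Antitone fun n : ℕ => (1 / (n + 1) : ℝ) := by
      intro a b hab
      apply one_div_le_one_div_of_le (by positivity)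
      exact_mod_cast by omega
    exact hanti.cauchySeq_series_mul_of_tendsto_zero_of_bounded
      tendsto_one_div_add_atTop_nhds_zero_nat hbd
  obtain ⟨l, hl⟩ := cauchySeq_tendsto_of_complete hc
  -- Abel limit
  have habel := Complex.tendsto_tsum_powerSeries_nhdsWithin_stolzSet
    (f := fun n : ℕ => w ^ n / n) hl (M := 2)
  -- the filter is nontrivial
  have hne : (𝓝[Complex.stolzSet 2] (1:ℂ)).NeBot :=
    Filter.neBot_of_le (Complex.nhdsWithin_lt_le_nhdsWithin_stolzSet one_lt_two)
  -- identify via -log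
  have hre : (1 - w) ∈ Complex.slitPlane := by
    left
    simp only [Complex.sub_re, Complex.one_re, sub_pos]
    by_contra h
    push_neg at h
    have h1 : w.re ≤ 1 := by
      calc w.re ≤ |w.re| := le_abs_self _
        _ ≤ ‖w‖ := Complex.abs_re_le_norm w
        _ = 1 := hw
    have hre1 : w.re = 1 := le_antisymm h1 h
    have : w.im = 0 := by
      have h2 : ‖w‖ = 1 := hw
      have := Complex.sq_norm w
      rw [Complex.normSq_apply, h2] at this
      nlinarith [this]
    exact hw1 (Complex.ext hre1 (by simp [this]))
  have hlog : Tendsto (fun z : ℂ => -Complex.log (1 - w * z)) (𝓝[Complex.stolzSet 2] (1:ℂ))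
      (𝓝 (-Complex.log (1 - w))) := by
    apply Tendsto.neg
    have : ContinuousAt (fun z : ℂ => Complex.log (1 - w * z)) 1 := by
      have h1 : ContinuousAt (fun z : ℂ => 1 - w * z) 1 := by fun_prop
      exact h1.clog (by simpa using hre)
    simpa using this.continuousWithinAt.tendsto
  have heq : ∀ z ∈ Complex.stolzSet 2, (∑' n : ℕ, (w ^ n / n) * z ^ n) = -Complex.log (1 - w * z) := by
    intro z hz
    have hz1 : ‖w * z‖ < 1 := by
      rw [norm_mul, hw, one_mul]; exact hz.1
    have := Complex.hasSum_taylorSeries_neg_log hz1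
    rw [← this.tsum_eq]
    congr 1
    ext n
    rw [mul_pow]; ring
  have habel' : Tendsto (fun z : ℂ => -Complex.log (1 - w * z)) (𝓝[Complex.stolzSet 2] (1:ℂ)) (𝓝 l) := by
    refine habel.congr' ?_
    filter_upwards [self_mem_nhdsWithin] with z hz
    exact heq z hz
  have : l = -Complex.log (1 - w) := tendsto_nhds_unique habel' hlog
  rwa [this] at hl

noncomputable def zet (q : ℕ) : ℂ := Complex.exp (2 * Real.pi * Complex.I / q)

lemma zet_ne_zero (q : ℕ) : zet q ≠ 0 := Complex.exp_ne_zero _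

lemma zet_zpow (q : ℕ) (m : ℤ) :
    zet q ^ m = Complex.exp (m * (2 * Real.pi * Complex.I / q)) :=
  (Complex.exp_int_mul _ m).symm

lemma zet_zpow_eq_one_iff {q : ℕ} (hq : 0 < q) (m : ℤ) :
    zet q ^ m = 1 ↔ (q : ℤ) ∣ m := by
  have hq' : (q : ℂ) ≠ 0 := Nat.cast_ne_zero.mpr hq.ne'
  rw [zet_zpow, Complex.exp_eq_one_iff]
  constructor
  · rintro ⟨n, hn⟩
    refine ⟨n, ?_⟩
    have h2 : (2 : ℂ) * Real.pi * Complex.I ≠ 0 := by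
      simp [Real.pi_ne_zero, Complex.I_ne_zero]
    have : (m : ℂ) = (q : ℂ) * n := by
      field_simp at hn
      exact hn
    exact_mod_cast this
  · rintro ⟨n, rfl⟩
    exact ⟨n, by field_simp; simp⟩

lemma zet_geom {q : ℕ} (hq : 0 < q) (m : ℤ) :
    ∑ x ∈ range q, zet q ^ (m * (x : ℤ)) = if (q : ℤ) ∣ m then (q : ℂ) else 0 := by
  have hterm : ∀ x : ℕ, zet q ^ (m * (x : ℤ)) = (zet q ^ m) ^ x := by
    intro x
    rw [zpow_mul, zpow_natCast]
  simp only [hterm]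
  by_cases hd : (q : ℤ) ∣ m
  · rw [if_pos hd, (zet_zpow_eq_one_iff hq m).mpr hd]
    simp
  · rw [if_neg hd]
    have h1 : zet q ^ m ≠ 1 := fun h => hd ((zet_zpow_eq_one_iff hq m).mp h)
    rw [geom_sum_eq h1]
    have : (zet q ^ m) ^ q = 1 := by
      rw [← zpow_natCast, ← zpow_mul, mul_comm, zpow_mul,
        (zet_zpow_eq_one_iff hq (q : ℤ)).mpr dvd_rfl, one_zpow]
    rw [this, sub_self, zero_div]

section f
variable {q : ℕ} {f : ℤ → ℂ}

lemma fper (hper : ∀ n : ℤ, f (n + q) = f n) : ∀ (k n : ℤ), f (n + k * q) = f n := by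
  intro k
  induction k using Int.induction_on with
  | zero => simp
  | succ k ih =>
      intro n
      have h : n + ((k : ℤ) + 1) * q = (n + q) + k * q := by ring
      rw [h, ih, hper]
  | pred k ih =>
      intro n
      have h : n + (-(k : ℤ) - 1) * q = (n - q) + (-k : ℤ) * q := by ring
      have h2 : f (n - q) = f n := by
        have := hper (n - q); rw [sub_add_cancel] at this; exact this.symm
      rw [h, ih, h2]

lemma f_zero (hodd : ∀ n : ℤ, f (-n) = -f n) : f 0 = 0 := by
  have := hodd 0
  rw [neg_zero] at this
  have h2 : (2 : ℂ) * f 0 = 0 := by linear_combination this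
  simpa using h2

lemma f_of_dvd (hper : ∀ n : ℤ, f (n + q) = f n) {n a : ℤ} (h : (q : ℤ) ∣ n - a) :
    f a = f n := by
  obtain ⟨k, hk⟩ := h
  have : n = a + k * q := by linarith
  rw [this, fper hper]

end f

section inv
variable {q : ℕ} {f fhat : ℤ → ℂ}

lemma inversion (hq : 0 < q) (hper : ∀ n : ℤ, f (n + q) = f n)
    (hfhat : ∀ x : ℤ, fhat x = (1 / (q : ℂ)) * ∑ a ∈ Finset.Icc 1 q,
      f a * zet q ^ (-(a : ℤ) * x)) (n : ℤ) :
    ∑ x ∈ range q, fhat x * zet q ^ (n * (x : ℤ)) = f n := by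
  have hq' : (q : ℂ) ≠ 0 := Nat.cast_ne_zero.mpr hq.ne'
  have key : ∑ x ∈ range q, fhat x * zet q ^ (n * (x : ℤ))
      = (1 / (q : ℂ)) * ∑ a ∈ Finset.Icc 1 q, f a *
          (if (q : ℤ) ∣ n - a then (q : ℂ) else 0) := by
    simp only [hfhat]
    have step1 : ∀ x : ℕ, (1 / (q : ℂ) * ∑ a ∈ Finset.Icc 1 q, f a * zet q ^ (-(a : ℤ) * x))
        * zet q ^ (n * (x : ℤ))
        = 1 / (q : ℂ) * ∑ a ∈ Finset.Icc 1 q, f a * zet q ^ ((n - a) * (x : ℤ)) := by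
      intro x
      rw [mul_assoc, Finset.sum_mul]
      congr 1
      refine Finset.sum_congr rfl fun a _ => ?_
      rw [mul_assoc, ← zpow_add₀ (zet_ne_zero q)]
      congr 2
      ring
    simp only [step1]
    rw [← Finset.mul_sum]
    congr 1
    rw [Finset.sum_comm]
    refine Finset.sum_congr rfl fun a _ => ?_
    rw [← zet_geom hq (n - a), Finset.mul_sum]
  rw [key]
  -- identify the unique surviving term
  set a₀ : ℕ := if (q : ℤ) ∣ n then q else (n % q).toNat with ha₀
  have hmem : a₀ ∈ Finset.Icc 1 q := by
    rw [Finset.mem_Icc, ha₀]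
    split_ifs with h
    · exact ⟨hq, le_refl q⟩
    · have h1 : 0 ≤ n % q := Int.emod_nonneg n (by exact_mod_cast hq.ne')
      have h2 : n % q < q := Int.emod_lt_of_pos n (by exact_mod_cast hq)
      have h3 : n % q ≠ 0 := fun hc => h (Int.dvd_of_emod_eq_zero hc)
      constructor
      · omega
      · omega
  have hdvd : (q : ℤ) ∣ n - a₀ := by
    rw [ha₀]
    split_ifs with h
    · exact dvd_sub h dvd_rfl
    · have h1 : 0 ≤ n % q := Int.emod_nonneg n (by exact_mod_cast hq.ne')
      rw [Int.toNat_of_nonneg h1]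
      exact Int.dvd_self_sub_of_emod_eq rfl
  rw [Finset.sum_eq_single_of_mem a₀ hmem]
  · rw [if_pos hdvd, f_of_dvd hper hdvd]
    field_simp
  · intro a ha hne
    rw [if_neg, mul_zero]
    intro hc
    have hd2 : (q : ℤ) ∣ (a : ℤ) - (a₀ : ℤ) := by
      have := dvd_sub hdvd hc
      simpa using this
    rw [Finset.mem_Icc] at ha hmem
    have : (a : ℤ) = a₀ := by
      rcases hd2 with ⟨k, hk⟩
      have hq1 : (1:ℤ) ≤ q := by exact_mod_cast hq
      have hb1 : -(q:ℤ) < (a:ℤ) - a₀ := by omega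
      have hb2 : (a:ℤ) - a₀ < q := by omega
      rw [hk] at hb1 hb2
      have hk0 : k = 0 := by nlinarith
      rw [hk0, mul_zero] at hk
      omega
    exact hne (by exact_mod_cast this)

end inv

section fhat
variable {q : ℕ} {f fhat : ℤ → ℂ}

lemma zet_zpow_q_mul {q : ℕ} (hq : 0 < q) (m : ℤ) : zet q ^ ((q : ℤ) * m) = 1 :=
  (zet_zpow_eq_one_iff hq _).mpr ⟨m, rfl⟩

lemma fhat_per (hq : 0 < q)
    (hfhat : ∀ x : ℤ, fhat x = (1 / (q : ℂ)) * ∑ a ∈ Finset.Icc 1 q,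
      f a * zet q ^ (-(a : ℤ) * x)) (x : ℤ) :
    fhat (x + q) = fhat x := by
  rw [hfhat, hfhat]
  congr 1
  refine Finset.sum_congr rfl fun a _ => ?_
  congr 1
  have : -(a : ℤ) * (x + q) = -(a : ℤ) * x + (q : ℤ) * (-a) := by ring
  rw [this, zpow_add₀ (zet_ne_zero q), zet_zpow_q_mul hq, mul_one]

lemma fhat_neg (hq : 0 < q) (hper : ∀ n : ℤ, f (n + q) = f n)
    (hodd : ∀ n : ℤ, f (-n) = -f n)
    (hfhat : ∀ x : ℤ, fhat x = (1 / (q : ℂ)) * ∑ a ∈ Finset.Icc 1 q,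
      f a * zet q ^ (-(a : ℤ) * x)) (x : ℤ) :
    fhat (-x) = -fhat x := by
  have hfq : f q = 0 := by
    have h1 : f ((0 : ℤ) + 1 * q) = f 0 := fper hper 1 0
    simpa [f_zero hodd] using h1
  rw [hfhat, hfhat, ← mul_neg]
  congr 1
  rw [← Finset.sum_neg_distrib]
  -- reduce both sums to Icc 1 (q-1)
  have hsplit : ∀ g : ℕ → ℂ, g q = 0 → ∑ a ∈ Finset.Icc 1 q, g a = ∑ a ∈ Finset.Icc 1 (q-1), g a := by
    intro g hg
    have : Finset.Icc 1 q = insert q (Finset.Icc 1 (q-1)) := by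
      ext a
      simp only [Finset.mem_Icc, Finset.mem_insert]
      omega
    rw [this, Finset.sum_insert (by simp only [Finset.mem_Icc]; omega), hg, zero_add]
  rw [hsplit _ (by simp [hfq]), hsplit _ (by simp [hfq])]
  refine Finset.sum_nbij' (fun a => q - a) (fun a => q - a) ?_ ?_ ?_ ?_ ?_
  · intro a ha; simp only [Finset.mem_Icc] at *; omega
  · intro a ha; simp only [Finset.mem_Icc] at *; omega
  · intro a ha; simp only [Finset.mem_Icc] at ha; omega
  · intro a ha; simp only [Finset.mem_Icc] at ha; omega
  · intro a ha
    simp only [Finset.mem_Icc] at ha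
    have hcast : ((q - a : ℕ) : ℤ) = (q : ℤ) - a := by
      have : a ≤ q := by omega
      push_cast [this]; ring
    rw [hcast]
    have hf : f ((q : ℤ) - a) = -f a := by
      have h1 : f (-(a:ℤ) + q) = f (-a) := hper (-(a:ℤ))
      rw [hodd] at h1
      rw [show (q:ℤ) - a = -(a:ℤ) + q by ring, h1]
    rw [hf]
    have hz : zet q ^ (-((q : ℤ) - a) * x) = zet q ^ ((a:ℤ) * x) := by
      have : -((q : ℤ) - a) * x = (a:ℤ) * x + (q : ℤ) * -x := by ring
      rw [this, zpow_add₀ (zet_ne_zero q), zet_zpow_q_mul hq, mul_one]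
    have hz2 : zet q ^ (-(a : ℤ) * -x) = zet q ^ ((a:ℤ) * x) := by
      congr 1; ring
    rw [hz, hz2]
    ring

end fhat


-- explicit log of 1 - root of unity
lemma log_one_sub_exp {θ : ℝ} (h1 : 0 < θ) (h2 : θ < 2 * Real.pi) :
    Complex.log (1 - Complex.exp ((θ : ℂ) * Complex.I))
      = (Real.log (2 * Real.sin (θ / 2)) : ℂ) + ((θ / 2 - Real.pi / 2 : ℝ) : ℂ) * Complex.I := by
  have hpi := Real.pi_pos
  set r : ℝ := 2 * Real.sin (θ / 2) with hr_def
  set φ : ℝ := θ / 2 - Real.pi / 2 with hφ_def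
  have hsin : 0 < Real.sin (θ / 2) := Real.sin_pos_of_pos_of_lt_pi (by linarith) (by linarith)
  have hr : 0 < r := by positivity
  have hkey : (1 : ℂ) - Complex.exp ((θ : ℂ) * Complex.I)
      = (r : ℂ) * Complex.exp ((φ : ℂ) * Complex.I) := by
    rw [Complex.exp_mul_I, Complex.exp_mul_I]
    have hcos : Complex.cos (θ : ℂ) = (Real.cos θ : ℂ) := (Complex.ofReal_cos θ).symm
    have hsin' : Complex.sin (θ : ℂ) = (Real.sin θ : ℂ) := (Complex.ofReal_sin θ).symm
    have hcosφ : Complex.cos (φ : ℂ) = (Real.cos φ : ℂ) := (Complex.ofReal_cos φ).symm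
    have hsinφ : Complex.sin (φ : ℂ) = (Real.sin φ : ℂ) := (Complex.ofReal_sin φ).symm
    rw [hcos, hsin', hcosφ, hsinφ]
    have hc1 : Real.cos φ = Real.sin (θ / 2) := by
      rw [hφ_def, show θ / 2 - Real.pi / 2 = -(Real.pi / 2 - θ / 2) by ring, Real.cos_neg,
        Real.cos_pi_div_two_sub]
    have hc2 : Real.sin φ = -Real.cos (θ / 2) := by
      rw [hφ_def, show θ / 2 - Real.pi / 2 = -(Real.pi / 2 - θ / 2) by ring, Real.sin_neg,
        Real.sin_pi_div_two_sub]
    have hc3 : Real.cos θ = 1 - 2 * Real.sin (θ / 2) ^ 2 := by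
      have h4 := Real.cos_two_mul (θ / 2)
      have h5 := Real.sin_sq_add_cos_sq (θ / 2)
      rw [show 2 * (θ / 2) = θ by ring] at h4
      nlinarith
    have hc4 : Real.sin θ = 2 * Real.sin (θ / 2) * Real.cos (θ / 2) := by
      rw [show θ = 2 * (θ / 2) by ring, Real.sin_two_mul]
      ring_nf
    rw [hc1, hc2, hc3, hc4, hr_def]
    push_cast
    ring
  rw [hkey]
  have habs : ‖(r : ℂ) * Complex.exp ((φ : ℂ) * Complex.I)‖ = r := by
    rw [norm_mul, Complex.norm_of_nonneg hr.le, Complex.norm_exp_ofReal_mul_I, mul_one]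
  have harg : Complex.arg ((r : ℂ) * Complex.exp ((φ : ℂ) * Complex.I)) = φ := by
    rw [Complex.arg_real_mul _ hr, Complex.exp_mul_I]
    apply Complex.arg_cos_add_sin_mul_I
    constructor
    · rw [hφ_def]; linarith
    · rw [hφ_def]; linarith
  rw [Complex.log, habs, harg, hr_def]

-- corollaries of the explicit log formula for powers of zet
lemma zet_pow_eq_exp {q : ℕ} (hq : 0 < q) (x : ℕ) :
    zet q ^ x = Complex.exp (((2 * Real.pi * x / q : ℝ) : ℂ) * Complex.I) := by
  have hq' : (q : ℂ) ≠ 0 := Nat.cast_ne_zero.mpr hq.ne'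
  rw [zet, ← Complex.exp_nat_mul]
  congr 1
  push_cast
  field_simp

lemma norm_zet_pow {q : ℕ} (hq : 0 < q) (x : ℕ) : ‖zet q ^ x‖ = 1 := by
  rw [zet_pow_eq_exp hq]
  exact Complex.norm_exp_ofReal_mul_I _

lemma zet_pow_ne_one {q : ℕ} (hq : 0 < q) {x : ℕ} (hx1 : 1 ≤ x) (hx2 : x < q) :
    zet q ^ x ≠ 1 := by
  intro h
  have : zet q ^ (x : ℤ) = 1 := by rw [zpow_natCast]; exact h
  have := (zet_zpow_eq_one_iff hq (x : ℤ)).mp this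
  rcases this with ⟨k, hk⟩
  have hq1 : (1:ℤ) ≤ q := by exact_mod_cast hq
  have hx1' : (1:ℤ) ≤ x := by exact_mod_cast hx1
  have hx2' : (x:ℤ) < q := by exact_mod_cast hx2
  have hk0 : 0 < k := by nlinarith
  nlinarith

lemma log_one_sub_zet_pow {q x : ℕ} (hq : 0 < q) (hx1 : 1 ≤ x) (hx2 : x < q) :
    Complex.log (1 - zet q ^ x)
      = (Real.log (2 * Real.sin (Real.pi * x / q)) : ℂ)
        + ((Real.pi * x / q - Real.pi / 2 : ℝ) : ℂ) * Complex.I := by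
  have hqR : (0:ℝ) < q := by exact_mod_cast hq
  have hpi := Real.pi_pos
  have hxR1 : (1:ℝ) ≤ x := by exact_mod_cast hx1
  have hxR2 : (x:ℝ) < q := by exact_mod_cast hx2
  rw [zet_pow_eq_exp hq]
  have h := log_one_sub_exp (θ := 2 * Real.pi * x / q) (by positivity)
    (by rw [div_lt_iff₀ hqR]; nlinarith)
  rw [h]
  have e1 : 2 * Real.pi * (x:ℝ) / q / 2 = Real.pi * x / q := by ring
  rw [e1]

theorem odd_L_one_formula (q : ℕ) (hq : 0 < q) (f : ℤ → ℂ)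
    (hper : ∀ n : ℤ, f (n + q) = f n) (hodd : ∀ n : ℤ, f (-n) = -f n)
    (halg : ∀ n : ℤ, IsAlgebraic ℚ (f n))
    (L : ℂ)
    (hL : Tendsto (fun N : ℕ => ∑ n ∈ Finset.Icc 1 N, f n / n) atTop (nhds L))
    (fhat : ℤ → ℂ)
    (hfhat : ∀ x : ℤ, fhat x = (1 / (q : ℂ)) * ∑ a ∈ Finset.Icc 1 q,
      f a * Complex.exp (2 * Real.pi * Complex.I / q) ^ (-(a : ℤ) * x)) :
    L = -(Complex.I * Real.pi / q) * ∑ x ∈ Finset.Icc 1 (q - 1), (x : ℂ) * fhat x ∧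
      (L = 0 ↔ ∑ x ∈ Finset.Icc 1 (q - 1), (x : ℂ) * fhat x = 0) := by
  have hfhat' : ∀ x : ℤ, fhat x = (1 / (q : ℂ)) * ∑ a ∈ Finset.Icc 1 q,
      f a * zet q ^ (-(a : ℤ) * x) := hfhat
  have hq' : (q : ℂ) ≠ 0 := Nat.cast_ne_zero.mpr hq.ne'
  have hqR : (0:ℝ) < q := by exact_mod_cast hq
  have hpi := Real.pi_pos
  have hfhat0 : fhat 0 = 0 := by
    have := fhat_neg hq hper hodd hfhat' 0
    rw [neg_zero] at this
    have h2 : (2 : ℂ) * fhat 0 = 0 := by linear_combination this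
    simpa using h2
  have hIcc : Finset.Icc 1 (q-1) = Finset.Ico 1 q := by
    ext a; simp only [Finset.mem_Icc, Finset.mem_Ico]; omega
  set T := ∑ x ∈ Finset.Icc 1 (q - 1), (x : ℂ) * fhat x with hT
  -- the inversion over Ico 1 q
  have hinv : ∀ n : ℤ, ∑ x ∈ Finset.Ico 1 q, fhat x * zet q ^ (n * (x : ℤ)) = f n := by
    intro n
    rw [← inversion hq hper hfhat' n, Finset.range_eq_Ico,
      show Finset.Ico 0 q = insert 0 (Finset.Ico 1 q) by
        ext a; simp only [Finset.mem_Ico, Finset.mem_insert]; omega,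
      Finset.sum_insert (by simp)]
    simp [hfhat0]
  -- sum of fhat over Ico 1 q is 0
  have hsum0 : ∑ x ∈ Finset.Ico 1 q, fhat x = 0 := by
    have h := hinv 0
    have h2 : ∀ x ∈ Finset.Ico 1 q, fhat x * zet q ^ ((0:ℤ) * (x:ℤ)) = fhat x := by
      intro x _
      rw [zero_mul, zpow_zero, mul_one]
    rw [Finset.sum_congr rfl h2] at h
    rw [h, f_zero hodd]
  -- convergence to the log sum
  have hA : Tendsto (fun N : ℕ => ∑ n ∈ Finset.Icc 1 N, f n / n) atTop
      (𝓝 (∑ x ∈ Finset.Ico 1 q, fhat x * (-Complex.log (1 - zet q ^ x)))) := by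
    have hrw : ∀ N : ℕ, ∑ n ∈ Finset.Icc 1 N, f n / n
        = ∑ x ∈ Finset.Ico 1 q, fhat x * (∑ n ∈ Finset.Icc 1 N, (zet q ^ x) ^ n / n) := by
      intro N
      have : ∀ n : ℕ, f n / n = ∑ x ∈ Finset.Ico 1 q, fhat x * ((zet q ^ x) ^ n / n) := by
        intro n
        rw [← hinv n, Finset.sum_div]
        refine Finset.sum_congr rfl fun x _ => ?_
        rw [mul_div_assoc]
        congr 2
        rw [← zpow_natCast (zet q ^ x) n, ← zpow_natCast (zet q) x, ← zpow_mul]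
        congr 1
        ring
      rw [Finset.sum_congr rfl fun n _ => this n, Finset.sum_comm]
      refine Finset.sum_congr rfl fun x _ => ?_
      rw [Finset.mul_sum]
    simp only [hrw]
    apply tendsto_finset_sum
    intro x hx
    rw [Finset.mem_Ico] at hx
    apply Tendsto.const_mul
    -- convert range-sums to Icc-sums
    have hbase := tendsto_sum_pow_div_nat (zet q ^ x) (norm_zet_pow hq x)
      (zet_pow_ne_one hq hx.1 hx.2)
    have heq : ∀ N : ℕ, ∑ n ∈ range (N+1), (zet q ^ x) ^ n / n
        = ∑ n ∈ Finset.Icc 1 N, (zet q ^ x) ^ n / n := by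
      intro N
      rw [show range (N+1) = insert 0 (Finset.Icc 1 N) by
        ext a; simp only [Finset.mem_range, Finset.mem_insert, Finset.mem_Icc]; omega]
      rw [Finset.sum_insert (by simp)]
      simp
    have := hbase.comp (tendsto_add_atTop_nat 1)
    simpa only [Function.comp_def, heq] using this
  have hL2 : L = ∑ x ∈ Finset.Ico 1 q, fhat x * (-Complex.log (1 - zet q ^ x)) :=
    tendsto_nhds_unique hL hA
  -- reflection
  set A := ∑ x ∈ Finset.Ico 1 q, fhat x * (-Complex.log (1 - zet q ^ x)) with hAdef
  have hfhat_refl : ∀ x : ℕ, x < q → fhat ((q - x : ℕ) : ℤ) = -fhat x := by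
    intro x hxq
    have hcast : ((q - x : ℕ) : ℤ) = -(x:ℤ) + q := by push_cast [hxq.le]; ring
    rw [hcast, fhat_per hq hfhat', fhat_neg hq hper hodd hfhat']
  have hrefl : A = ∑ x ∈ Finset.Ico 1 q, fhat x * Complex.log (1 - zet q ^ (q - x)) := by
    rw [hAdef]
    refine Finset.sum_nbij' (fun x => q - x) (fun x => q - x) ?_ ?_ ?_ ?_ ?_
    · intro a ha; simp only [Finset.mem_Ico] at *; omega
    · intro a ha; simp only [Finset.mem_Ico] at *; omega
    · intro a ha; simp only [Finset.mem_Ico] at ha; omega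
    · intro a ha; simp only [Finset.mem_Ico] at ha; omega
    · intro a ha
      simp only [Finset.mem_Ico] at ha
      rw [hfhat_refl a ha.2]
      rw [show q - (q - a) = a by omega]
      ring
  have h2A : A + A = -(2 * Real.pi * Complex.I / q) * T := by
    nth_rewrite 2 [hrefl]
    rw [← Finset.sum_add_distrib]
    have hterm : ∀ x ∈ Finset.Ico 1 q,
        fhat x * (-Complex.log (1 - zet q ^ x)) + fhat x * Complex.log (1 - zet q ^ (q - x))
        = Real.pi * Complex.I * fhat x
            - (2 * Real.pi * Complex.I / q) * ((x:ℂ) * fhat x) := by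
      intro x hx
      rw [Finset.mem_Ico] at hx
      have hx1 := hx.1
      have hx2 := hx.2
      have hxq1 : 1 ≤ q - x := by omega
      have hxq2 : q - x < q := by omega
      rw [log_one_sub_zet_pow hq hx1 hx2, log_one_sub_zet_pow hq hxq1 hxq2]
      have hcast : ((q - x : ℕ) : ℝ) = (q : ℝ) - x := by push_cast [hx2.le]; ring
      have hsin : Real.sin (Real.pi * ((q - x : ℕ) : ℝ) / q) = Real.sin (Real.pi * x / q) := by
        rw [hcast]
        rw [show Real.pi * ((q:ℝ) - x) / q = Real.pi - Real.pi * x / q by field_simp]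
        exact Real.sin_pi_sub _
      rw [hsin, hcast]
      have harg : (Real.pi * ((q:ℝ) - x) / q - Real.pi / 2)
          = Real.pi - Real.pi * x / q - Real.pi / 2 := by field_simp
      rw [harg]
      have hpix : ((Real.pi - Real.pi * x / q - Real.pi / 2 : ℝ) : ℂ)
          - ((Real.pi * x / q - Real.pi / 2 : ℝ) : ℂ)
          = (Real.pi : ℂ) - 2 * Real.pi * x / q := by
        push_cast
        field_simp
        ring
      have hq2 : ((Real.pi * x / q - Real.pi / 2 : ℝ) : ℂ)
          = (Real.pi : ℂ) * x / q - Real.pi / 2 := by push_cast; ring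
      have hq3 : ((Real.pi - Real.pi * x / q - Real.pi / 2 : ℝ) : ℂ)
          = (Real.pi : ℂ) - Real.pi * x / q - Real.pi / 2 := by push_cast; ring
      rw [hq2, hq3]
      field_simp
      ring
    rw [Finset.sum_congr rfl hterm, Finset.sum_sub_distrib, ← Finset.mul_sum, ← Finset.mul_sum,
      hsum0, mul_zero, zero_sub, hT, hIcc]
    ring
  have hformula : L = -(Complex.I * Real.pi / q) * T := by
    rw [hL2]
    have : A = -(Real.pi * Complex.I / q) * T := by linear_combination h2A / 2
    rw [this]
    ring
  refine ⟨hformula, ?_⟩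
  rw [hformula]
  have hc : -(Complex.I * Real.pi / q) ≠ 0 := by
    simp only [neg_ne_zero, div_ne_zero_iff]
    constructor
    · exact mul_ne_zero Complex.I_ne_zero (by exact_mod_cast Real.pi_ne_zero)
    · exact hq'
  constructor
  · intro h
    rcases mul_eq_zero.mp h with h | h
    · exact absurd h hc
    · exact h
  · intro h
    rw [h, mul_zero]
end Aux
end

section
/- Let f be an odd function periodic with period q with L(1,f) convergent. Then ∑_{x=1}^{q-1} x f̂(x) = ∑_{n=1}^{q-1} f(n) ζ_q^n/(1 − ζ_q^n), where f̂ is the Fourier transform of f and ζ_q = e^{2πi/q}. -/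
open Finset

lemma tele (z : ℂ) (m : ℕ) :
    (z - 1) * ∑ x ∈ range m, (x : ℂ) * z ^ x
      = ((m : ℂ) - 1) * z ^ m - (∑ x ∈ range m, z ^ x) + 1 := by
  induction m with
  | zero => simp
  | succ n ih =>
    rw [Finset.sum_range_succ, Finset.sum_range_succ, mul_add, ih]
    push_cast
    ring

lemma keysum (q : ℕ) (hq : 2 ≤ q) (z : ℂ) (hzq : z ^ q = 1) (hz : z ≠ 1) :
    ∑ x ∈ Icc 1 (q - 1), (x : ℂ) * z ^ x = q / (z - 1) := by
  have hz1 : z - 1 ≠ 0 := sub_ne_zero.mpr hz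
  have hgeom : (∑ x ∈ range q, z ^ x) = 0 := by
    have := geom_sum_mul z q
    rw [hzq, sub_self] at this
    exact (mul_eq_zero.mp this).resolve_right hz1
  have hset : range q = insert 0 (Icc 1 (q - 1)) := by
    ext x; simp [Finset.mem_range, Finset.mem_Icc]; omega
  have hIcc : ∑ x ∈ range q, (x : ℂ) * z ^ x = ∑ x ∈ Icc 1 (q - 1), (x : ℂ) * z ^ x := by
    rw [hset, Finset.sum_insert (by simp)]; simp
  have h := tele z q
  rw [hzq, hgeom, hIcc] at h
  rw [eq_div_iff hz1, mul_comm, h]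
  ring

theorem odd_weighted_fourier_sum (q : ℕ) (hq : 2 ≤ q) (f : ℤ → ℂ)
    (hper : ∀ n : ℤ, f (n + q) = f n) (hodd : ∀ n : ℤ, f (-n) = -f n)
    (fhat : ℤ → ℂ)
    (hfhat : ∀ x : ℤ, fhat x = (1 / (q : ℂ)) * ∑ a ∈ Finset.Icc 1 q,
      f a * Complex.exp (2 * Real.pi * Complex.I / q) ^ (-(a : ℤ) * x)) :
    ∑ x ∈ Finset.Icc 1 (q - 1), (x : ℂ) * fhat x =
      ∑ n ∈ Finset.Icc 1 (q - 1),
        f n * Complex.exp (2 * Real.pi * Complex.I / q) ^ (n : ℕ) /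
          (1 - Complex.exp (2 * Real.pi * Complex.I / q) ^ (n : ℕ)) := by
  set ζ : ℂ := Complex.exp (2 * Real.pi * Complex.I / q) with hζ
  have hq0 : (q : ℂ) ≠ 0 := Nat.cast_ne_zero.mpr (by omega)
  have hprim : IsPrimitiveRoot ζ q := Complex.isPrimitiveRoot_exp q (by omega)
  have hζq : ζ ^ q = 1 := hprim.pow_eq_one
  have hζ0 : ζ ≠ 0 := hprim.ne_zero (by omega)
  have hf0 : f 0 = 0 := by
    have := hodd 0; simp at this; linear_combination this / 2
  have hfq : f q = 0 := by
    have := hper 0; simpa [hf0] using this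
  -- rewrite LHS
  calc ∑ x ∈ Icc 1 (q - 1), (x : ℂ) * fhat x
      = ∑ a ∈ Icc 1 q, (1 / (q:ℂ)) * f a * ∑ x ∈ Icc 1 (q - 1), (x : ℂ) * ζ ^ (-(a:ℤ) * x) := by
        simp only [hfhat, Finset.mul_sum]
        rw [Finset.sum_comm]
        apply Finset.sum_congr rfl
        intro a _
        apply Finset.sum_congr rfl
        intro x _
        ring
    _ = ∑ a ∈ Icc 1 (q - 1), (1 / (q:ℂ)) * f a * ∑ x ∈ Icc 1 (q - 1), (x : ℂ) * ζ ^ (-(a:ℤ) * x) := by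
        rw [show q = q - 1 + 1 by omega, Finset.sum_Icc_succ_top (by omega)]
        rw [show q - 1 + 1 = q by omega]
        simp [hfq]
    _ = ∑ n ∈ Icc 1 (q - 1), f n * ζ ^ (n : ℕ) / (1 - ζ ^ (n : ℕ)) := by
        apply Finset.sum_congr rfl
        intro a ha
        rw [Finset.mem_Icc] at ha
        have ha1 : 1 ≤ a := ha.1
        have haq : a < q := by omega
        have hne1 : ζ ^ a ≠ 1 := hprim.pow_ne_one_of_pos_of_lt (by omega) haq
        have hden : 1 - ζ ^ a ≠ 0 := sub_ne_zero.mpr (Ne.symm hne1)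
        set z : ℂ := ζ ^ (-(a:ℤ)) with hzdef
        have hzx : ∀ x : ℕ, ζ ^ (-(a:ℤ) * x) = z ^ x := by
          intro x
          rw [hzdef, ← zpow_natCast (ζ ^ (-(a:ℤ))), ← zpow_mul]
        have hzq' : z ^ q = 1 := by
          rw [hzdef, ← zpow_natCast, ← zpow_mul, mul_comm, zpow_mul, zpow_natCast, hζq,
            one_zpow]
        have hzinv : z = (ζ ^ a)⁻¹ := by
          rw [hzdef, zpow_neg, zpow_natCast]
        have hzne1 : z ≠ 1 := by
          rw [hzinv]
          intro h
          exact hne1 (by rw [← inv_inv (ζ ^ a), h, inv_one])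
        simp only [hzx]
        rw [keysum q hq z hzq' hzne1, hzinv]
        have hpow0 : ζ ^ a ≠ 0 := pow_ne_zero _ hζ0
        field_simp
end

section
/- Let p be a prime and define f : ℤ → ℤ periodic mod p² by f(n) = 1 if p ∤ n, f(n) = 1 − 2p if p | n but p² ∤ n, and f(n) = (p−1)² if p² | n. Then ∑_{a=1}^{p²} f(a) = 0 and ∑_{n=1}^{∞} f(n)/n = 0. -/
open Finset Filter Real

private lemma Hcast (N : ℕ) : ((harmonic N : ℚ) : ℝ) = ∑ n ∈ Finset.Icc 1 N, (1:ℝ)/n := by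
  rw [harmonic_eq_sum_Icc]
  push_cast
  exact Finset.sum_congr rfl fun n _ => (one_div _).symm

private lemma sum_filter_inv (d N : ℕ) (hd : 0 < d) :
    ∑ n ∈ (Finset.Icc 1 N).filter (d ∣ ·), (1:ℝ)/n
      = (1/d) * ∑ m ∈ Finset.Icc 1 (N/d), (1:ℝ)/m := by
  rw [Finset.mul_sum]
  refine Finset.sum_nbij' (fun n => n / d) (fun m => d * m) ?_ ?_ ?_ ?_ ?_
  · intro a ha
    simp only [Finset.mem_filter, Finset.mem_Icc] at ha ⊢
    obtain ⟨⟨h1, h2⟩, hdvd⟩ := ha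
    exact ⟨Nat.one_le_div_iff hd |>.2 (Nat.le_of_dvd h1 hdvd), Nat.div_le_div_right h2⟩
  · intro m hm
    simp only [Finset.mem_filter, Finset.mem_Icc] at hm ⊢
    refine ⟨⟨Nat.mul_pos hd hm.1, ?_⟩, Dvd.intro m rfl⟩
    calc d * m ≤ d * (N / d) := Nat.mul_le_mul_left d hm.2
    _ ≤ N := Nat.mul_div_le N d
  · intro a ha
    simp only [Finset.mem_filter] at ha
    exact Nat.mul_div_cancel' ha.2
  · intro m hm
    exact Nat.mul_div_cancel_left m hd
  · intro a ha
    simp only [Finset.mem_filter, Finset.mem_Icc] at ha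
    obtain ⟨⟨h1, h2⟩, hdvd⟩ := ha
    have ha' : (a:ℝ) = (d:ℝ) * ((a/d : ℕ) : ℝ) := by
      exact_mod_cast (Nat.mul_div_cancel' hdvd).symm
    rw [ha', div_mul_div_comm, one_mul]

private lemma nat_div_tendsto (d : ℕ) (hd : 0 < d) :
    Tendsto (fun N : ℕ => N / d) atTop atTop :=
  tendsto_atTop_atTop.2 fun b => ⟨b * d, fun n hn => (Nat.le_div_iff_mul_le hd).2 hn⟩

private lemma log_div_tendsto (d : ℕ) (hd : 0 < d) :
    Tendsto (fun N : ℕ => Real.log (N/d : ℕ) - Real.log N + Real.log d) atTop (nhds 0) := by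
  have hratio : Tendsto (fun N : ℕ => ((d * (N/d) : ℕ) : ℝ) / N) atTop (nhds 1) := by
    have hlb : Tendsto (fun N : ℕ => 1 - (d:ℝ)/N) atTop (nhds 1) := by
      simpa using tendsto_const_nhds.sub (tendsto_const_div_atTop_nhds_zero_nat (d:ℝ))
    refine tendsto_of_tendsto_of_tendsto_of_le_of_le' hlb tendsto_const_nhds ?_ ?_
    · filter_upwards [eventually_gt_atTop 0] with N hN
      have hNpos : (0:ℝ) < N := by exact_mod_cast hN
      have hle : (N:ℝ) - d ≤ ((d * (N/d) : ℕ) : ℝ) := by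
        have h2 : N < d * (N/d) + d := by
          have := Nat.mod_lt N hd
          have := Nat.mod_add_div N d
          omega
        have : (N:ℝ) < (d * (N/d) : ℕ) + d := by exact_mod_cast h2
        linarith
      have : (1:ℝ) - d/N = ((N:ℝ) - d)/N := by field_simp
      rw [this]
      exact div_le_div_of_nonneg_right hle hNpos.le |>.trans_eq rfl
    · filter_upwards [eventually_gt_atTop 0] with N hN
      have hNpos : (0:ℝ) < N := by exact_mod_cast hN
      rw [div_le_one hNpos]
      exact_mod_cast Nat.mul_div_le N d
  have hcont : Tendsto (fun N : ℕ => Real.log (((d * (N/d) : ℕ) : ℝ) / N)) atTop (nhds 0) := by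
    have := (Real.continuousAt_log (by norm_num : (1:ℝ) ≠ 0)).tendsto.comp hratio
    simpa [Function.comp_def] using this
  refine hcont.congr' ?_
  filter_upwards [(nat_div_tendsto d hd).eventually (eventually_ge_atTop 1),
    eventually_gt_atTop 0] with N hN1 hN0
  have hq : (0:ℝ) < ((N/d : ℕ) : ℝ) := by exact_mod_cast hN1
  have hNpos : (0:ℝ) < N := by exact_mod_cast hN0
  have hd' : (0:ℝ) < d := by exact_mod_cast hd
  rw [Real.log_div (by push_cast; positivity) (by positivity)]
  push_cast
  rw [Real.log_mul (by positivity) (by positivity)]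
  ring

theorem chowla_counterexample (p : ℕ) (hp : p.Prime) (f : ℤ → ℤ)
    (hf : ∀ n : ℤ, f n =
      if ¬ ((p : ℤ) ∣ n) then 1
      else if ¬ ((p ^ 2 : ℤ) ∣ n) then 1 - 2 * (p : ℤ)
      else ((p : ℤ) - 1) ^ 2) :
    (∑ a ∈ Finset.Icc 1 (p ^ 2), f a = 0) ∧
      Tendsto (fun N : ℕ => ∑ n ∈ Finset.Icc 1 N, (f n : ℝ) / n) atTop (nhds 0) := by
  have hp0 : 0 < p := hp.pos
  have fval : ∀ n : ℕ, f n = 1 - 2*(p:ℤ)*(if p ∣ n then 1 else 0)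
      + (p:ℤ)^2*(if p^2 ∣ n then 1 else 0) := by
    intro n
    rw [hf]
    have c1 : ((p:ℤ) ∣ (n:ℤ)) ↔ p ∣ n := Int.natCast_dvd_natCast
    have c2 : ((p:ℤ)^2 ∣ (n:ℤ)) ↔ p^2 ∣ n := by
      rw [show ((p:ℤ)^2) = ((p^2 : ℕ) : ℤ) by push_cast; ring]
      exact Int.natCast_dvd_natCast
    by_cases h2 : p^2 ∣ n
    · have h1 : p ∣ n := dvd_trans (dvd_pow_self p two_ne_zero) h2
      simp only [c1, c2, h1, h2, not_true, if_false, if_true, ite_true, ite_false]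
      ring
    · by_cases h1 : p ∣ n
      · simp only [c1, c2, h1, h2, not_true, not_false_iff, if_false, if_true, ite_true,
          ite_false]
        ring
      · simp [c1, c2, h1, h2]
  constructor
  · have key : ∑ a ∈ Finset.Icc 1 (p^2), f a
        = ((Finset.Icc 1 (p^2)).card : ℤ)
          - 2*(p:ℤ) * (((Finset.Icc 1 (p^2)).filter (p ∣ ·)).card : ℤ)
          + (p:ℤ)^2 * (((Finset.Icc 1 (p^2)).filter (p^2 ∣ ·)).card : ℤ) := by
      simp_rw [fval]
      rw [Finset.sum_add_distrib, Finset.sum_sub_distrib, ← Finset.mul_sum, ← Finset.mul_sum,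
        Finset.sum_boole, Finset.sum_boole]
      simp
    rw [key]
    have e0 : (Finset.Icc 1 (p^2)).card = p^2 := by simp
    have e1 : ((Finset.Icc 1 (p^2)).filter (p ∣ ·)).card = p := by
      rw [show Finset.Icc 1 (p^2) = Finset.Ioc 0 (p^2) from Finset.Icc_add_one_left_eq_Ioc 0 (p^2),
        Nat.Ioc_filter_dvd_card_eq_div, sq, Nat.mul_div_cancel_left p hp0]
    have e2 : ((Finset.Icc 1 (p^2)).filter (p^2 ∣ ·)).card = 1 := by
      rw [show Finset.Icc 1 (p^2) = Finset.Ioc 0 (p^2) from Finset.Icc_add_one_left_eq_Ioc 0 (p^2),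
        Nat.Ioc_filter_dvd_card_eq_div, Nat.div_self (by positivity)]
    rw [e0, e1, e2]
    push_cast
    ring
  · set H : ℕ → ℝ := fun N => ∑ n ∈ Finset.Icc 1 N, (1:ℝ)/n with hH
    have sumS : ∀ N : ℕ, ∑ n ∈ Finset.Icc 1 N, (f n : ℝ) / n
        = H N - 2 * H (N/p) + H (N/p^2) := by
      intro N
      have hpt : ∀ n ∈ Finset.Icc 1 N, (f n : ℝ) / n
          = (1:ℝ)/n - 2*(p:ℝ) * (if p ∣ n then (1:ℝ)/n else 0)
            + (p:ℝ)^2 * (if p^2 ∣ n then (1:ℝ)/n else 0) := by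
        intro n hn
        rw [fval n]
        push_cast
        by_cases h1 : p ∣ n <;> by_cases h2 : p^2 ∣ n <;> simp [h1, h2] <;> ring
      rw [Finset.sum_congr rfl hpt, Finset.sum_add_distrib, Finset.sum_sub_distrib,
        ← Finset.mul_sum, ← Finset.mul_sum, ← Finset.sum_filter, ← Finset.sum_filter,
        sum_filter_inv p N hp0, sum_filter_inv (p^2) N (by positivity)]
      simp only [hH]
      have hpne : (p:ℝ) ≠ 0 := by positivity
      push_cast
      field_simp
    have hA : Tendsto (fun N : ℕ => H N - Real.log N) atTop
        (nhds Real.eulerMascheroniConstant) := by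
      have : ∀ N : ℕ, H N = ((harmonic N : ℚ) : ℝ) := fun N => (Hcast N).symm
      simp only [this]
      exact_mod_cast Real.tendsto_harmonic_sub_log
    have hB := hA.comp (nat_div_tendsto p hp0)
    have hC := hA.comp (nat_div_tendsto (p^2) (by positivity))
    have hD := log_div_tendsto p hp0
    have hE : Tendsto (fun N : ℕ => Real.log ((N/p^2 : ℕ)) - Real.log ((N/p : ℕ))
        + Real.log p) atTop (nhds 0) := by
      have h := (log_div_tendsto p hp0).comp (nat_div_tendsto p hp0)
      refine h.congr fun N => ?_
      simp only [Function.comp_apply, Nat.div_div_eq_div_mul]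
      rw [show p * p = p^2 by ring]
    have T := ((hA.sub (hB.const_mul 2)).add hC).add (hE.sub hD)
    rw [show Real.eulerMascheroniConstant - 2 * Real.eulerMascheroniConstant
        + Real.eulerMascheroniConstant + ((0:ℝ) - 0) = 0 by ring] at T
    refine T.congr fun N => ?_
    rw [sumS N]
    simp only [Function.comp_apply]
    ring
end

section
/- Fix q ≥ 2, a divisor d of q with 1 < d < q, and 1 ≤ c ≤ d−1. Define F_{d,c} : ℤ → ℚ, periodic mod q, by F_{d,c} = F^{(1)}_{d,c} − F^{(2)}_{d,c}, where F^{(1)}_{d,c}(x) = 1/2 if x ≡ c mod d and 0 otherwise, and F^{(2)}_{d,c}(x) = 1/2 if x ≡ (q/d)c mod q and 0 otherwise. Then the Fourier transform of F_{d,c} satisfies: for 1 ≤ y ≤ q, F̂_{d,c}(y) = ζ_q^{-cy}/(2d) − ζ_d^{-cy}/(2q) if (q/d) | y, and F̂_{d,c}(y) = −ζ_d^{-cy}/(2q) otherwise. -/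
open Finset

private lemma aux_decomp (d q c a : ℕ) (hd1 : 1 < d) (hc1 : 1 ≤ c) (hc2 : c ≤ d - 1)
    (ha1 : 1 ≤ a) (t : ℤ) (ht : (a : ℤ) - c = d * t) :
    a = c + d * t.toNat := by
  have hdz : (0 : ℤ) < d := by exact_mod_cast (by omega : 0 < d)
  have hcz : (c : ℤ) ≤ (d : ℤ) - 1 := by
    have : (c : ℤ) ≤ ((d - 1 : ℕ) : ℤ) := by exact_mod_cast hc2
    omega
  have haz : (1 : ℤ) ≤ (a : ℤ) := by exact_mod_cast ha1
  have htnn : 0 ≤ t := by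
    by_contra h
    push_neg at h
    have h1 : t ≤ -1 := by omega
    have h2 : (d : ℤ) * t ≤ (d : ℤ) * (-1) := mul_le_mul_of_nonneg_left h1 (le_of_lt hdz)
    linarith
  have hcast : ((c + d * t.toNat : ℕ) : ℤ) = (a : ℤ) := by
    push_cast [Int.toNat_of_nonneg htnn]
    linarith
  exact_mod_cast hcast.symm


theorem fourier_transform_of_F (q d : ℕ) (hq : 2 ≤ q) (hd : d ∣ q)
    (hd1 : 1 < d) (hdq : d < q) (c : ℕ) (hc1 : 1 ≤ c) (hc2 : c ≤ d - 1)
    (F : ℤ → ℂ)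
    (hF : ∀ x : ℤ, F x =
      (if (d : ℤ) ∣ (x - c) then (1 : ℂ) / 2 else 0) -
      (if (q : ℤ) ∣ (x - (q / d : ℕ) * c) then (1 : ℂ) / 2 else 0))
    (y : ℕ) (hy1 : 1 ≤ y) (hy2 : y ≤ q) :
    (1 / (q : ℂ)) * ∑ a ∈ Finset.Icc 1 q,
        F a * Complex.exp (2 * Real.pi * Complex.I / q) ^ (-(a : ℤ) * y) =
      if (q / d : ℕ) ∣ y then
        Complex.exp (2 * Real.pi * Complex.I / q) ^ (-(c : ℤ) * y) / (2 * d) -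
          (Complex.exp (2 * Real.pi * Complex.I / q) ^ ((q / d : ℕ) : ℤ)) ^ (-(c : ℤ) * y) / (2 * q)
      else
        -(Complex.exp (2 * Real.pi * Complex.I / q) ^ ((q / d : ℕ) : ℤ)) ^ (-(c : ℤ) * y) / (2 * q) := by
  have hq0 : q ≠ 0 := by omega
  have hd0 : d ≠ 0 := by omega
  set ζ := Complex.exp (2 * Real.pi * Complex.I / q) with hζdef
  set m := q / d with hm
  have hdm : d * m = q := Nat.mul_div_cancel' hd
  have hm0 : m ≠ 0 := by rintro h; rw [h, mul_zero] at hdm; omega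
  have hm1 : 1 ≤ m := Nat.one_le_iff_ne_zero.2 hm0
  have hcd : c + 1 ≤ d := by omega
  have hmcq : m * c < q := by nlinarith
  have hmc1 : 1 ≤ m * c := Nat.one_le_iff_ne_zero.2 (by positivity)
  have hprim : IsPrimitiveRoot ζ q := Complex.isPrimitiveRoot_exp q hq0
  have hζ0 : ζ ≠ 0 := Complex.exp_ne_zero _
  have hζq : ζ ^ (q : ℤ) = 1 := by
    rw [zpow_natCast]; exact hprim.pow_eq_one
  -- split the sum
  have hsplit : ∑ a ∈ Finset.Icc 1 q, F a * ζ ^ (-(a : ℤ) * y) =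
      (∑ a ∈ Finset.Icc 1 q,
        (if (d : ℤ) ∣ ((a : ℤ) - c) then (1 : ℂ) / 2 else 0) * ζ ^ (-(a : ℤ) * y)) -
      (∑ a ∈ Finset.Icc 1 q,
        (if (q : ℤ) ∣ ((a : ℤ) - m * c) then (1 : ℂ) / 2 else 0) * ζ ^ (-(a : ℤ) * y)) := by
    rw [← Finset.sum_sub_distrib]
    refine Finset.sum_congr rfl fun a _ => ?_
    rw [hF]; ring
  -- second sum
  have hS2 : (∑ a ∈ Finset.Icc 1 q,
      (if (q : ℤ) ∣ ((a : ℤ) - m * c) then (1 : ℂ) / 2 else 0) * ζ ^ (-(a : ℤ) * y)) =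
      (1 / 2 : ℂ) * ζ ^ (-((m * c : ℕ) : ℤ) * y) := by
    rw [Finset.sum_eq_single_of_mem (m * c) (by simp [Finset.mem_Icc]; omega)]
    · rw [if_pos (by push_cast; simp)]
    · intro b hb hbne
      simp only [Finset.mem_Icc] at hb
      rw [if_neg, zero_mul]
      intro hdvd
      have hmcZ : (1 : ℤ) ≤ (m : ℤ) * c := by exact_mod_cast hmc1
      have hmcZ2 : (m : ℤ) * c < (q : ℤ) := by exact_mod_cast hmcq
      have hbz : (1 : ℤ) ≤ (b : ℤ) := by exact_mod_cast hb.1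
      have hbz2 : (b : ℤ) ≤ (q : ℤ) := by exact_mod_cast hb.2
      have hz : (b : ℤ) - (m : ℤ) * c = 0 :=
        Int.eq_zero_of_abs_lt_dvd hdvd (by rw [abs_lt]; omega)
      apply hbne
      have hbeq : (b : ℤ) = ((m * c : ℕ) : ℤ) := by push_cast; omega
      exact_mod_cast hbeq
  -- first sum: reindex
  have hre : (∑ a ∈ Finset.Icc 1 q,
      (if (d : ℤ) ∣ ((a : ℤ) - c) then (1 : ℂ) / 2 else 0) * ζ ^ (-(a : ℤ) * y)) =
      ∑ k ∈ Finset.range m, (1 / 2 : ℂ) * ζ ^ (-((c : ℤ) + k * d) * y) := by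
    have : ∀ a ∈ Finset.Icc 1 q,
        (if (d : ℤ) ∣ ((a : ℤ) - c) then (1 : ℂ) / 2 else 0) * ζ ^ (-(a : ℤ) * y) =
        (if (d : ℤ) ∣ ((a : ℤ) - c) then (1 / 2 : ℂ) * ζ ^ (-(a : ℤ) * y) else 0) := by
      intro a _; split <;> simp
    rw [Finset.sum_congr rfl this, ← Finset.sum_filter]
    refine Finset.sum_nbij' (i := fun a => (a - c) / d) (j := fun k => c + k * d)
      ?_ ?_ ?_ ?_ ?_
    · intro a ha
      simp only [Finset.mem_filter, Finset.mem_Icc] at ha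
      obtain ⟨⟨ha1, ha2⟩, t, ht⟩ := ha
      have hk := aux_decomp d q c a hd1 hc1 hc2 ha1 t ht
      set k := t.toNat with hkdef
      have hsub : a - c = d * k := by omega
      have hdiv : (a - c) / d = k := by
        rw [hsub]; exact Nat.mul_div_cancel_left k (by omega)
      simp only [Finset.mem_range, hdiv]
      have hlt : d * k < d * m := by omega
      exact Nat.lt_of_mul_lt_mul_left hlt
    · intro k hk
      simp only [Finset.mem_range] at hk
      simp only [Finset.mem_filter, Finset.mem_Icc]
      have h2 : d * (k + 1) ≤ d * m := Nat.mul_le_mul_left d (by omega)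
      have h3 : d * (k + 1) = d * k + d := by ring
      have h4 : k * d = d * k := Nat.mul_comm _ _
      refine ⟨⟨by omega, by omega⟩, ⟨(k : ℤ), by push_cast; ring⟩⟩
    · intro a ha
      simp only [Finset.mem_filter, Finset.mem_Icc] at ha
      obtain ⟨⟨ha1, ha2⟩, t, ht⟩ := ha
      have hk := aux_decomp d q c a hd1 hc1 hc2 ha1 t ht
      set k := t.toNat with hkdef
      have hsub : a - c = d * k := by omega
      have hdiv : (a - c) / d = k := by
        rw [hsub]; exact Nat.mul_div_cancel_left k (by omega)
      have h4 : k * d = d * k := Nat.mul_comm _ _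
      simp only [hdiv]
      omega
    · intro k hk
      have h4 : k * d = d * k := Nat.mul_comm _ _
      have : c + k * d - c = d * k := by omega
      rw [this]
      exact Nat.mul_div_cancel_left k (by omega)
    · intro a ha
      simp only [Finset.mem_filter, Finset.mem_Icc] at ha
      obtain ⟨⟨ha1, ha2⟩, t, ht⟩ := ha
      have hk := aux_decomp d q c a hd1 hc1 hc2 ha1 t ht
      set k := t.toNat with hkdef
      have hsub : a - c = d * k := by omega
      have hdiv : (a - c) / d = k := by
        rw [hsub]; exact Nat.mul_div_cancel_left k (by omega)
      simp only [hdiv]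
      congr 1
      have : (a : ℤ) = (c : ℤ) + (k : ℤ) * d := by
        have := hk; push_cast [this]; ring
      rw [this]
  -- geometric sum
  have hgeo : (∑ k ∈ Finset.range m, (1 / 2 : ℂ) * ζ ^ (-((c : ℤ) + k * d) * y)) =
      (1 / 2 : ℂ) * ζ ^ (-(c : ℤ) * y) * ∑ k ∈ Finset.range m, (ζ ^ (-(d : ℤ) * y)) ^ k := by
    rw [Finset.mul_sum]
    refine Finset.sum_congr rfl fun k _ => ?_
    rw [← zpow_natCast (ζ ^ (-(d : ℤ) * y)) k, ← zpow_mul, mul_assoc, ← zpow_add₀ hζ0]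
    congr 1
    push_cast
    ring
  have hwm : (ζ ^ (-(d : ℤ) * y)) ^ m = 1 := by
    rw [← zpow_natCast (ζ ^ (-(d : ℤ) * y)) m, ← zpow_mul]
    have : (-(d : ℤ) * y) * m = (-(y : ℤ)) * q := by
      have : ((d : ℤ)) * m = q := by exact_mod_cast hdm
      linear_combination (-(y : ℤ)) * this
    rw [this, zpow_mul', hζq, one_zpow]
  have hweq : (ζ ^ (-(d : ℤ) * y)) = 1 ↔ m ∣ y := by
    rw [hprim.zpow_eq_one_iff_dvd]
    constructor
    · rintro ⟨t, ht⟩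
      have hq' : (q : ℤ) = (d : ℤ) * m := by exact_mod_cast hdm.symm
      have : (m : ℤ) ∣ (y : ℤ) := by
        refine ⟨-t, ?_⟩
        have hdz : (d : ℤ) ≠ 0 := by exact_mod_cast hd0
        have := ht
        rw [hq'] at this
        apply mul_left_cancel₀ hdz; linear_combination (-1 : ℤ) * this
      exact_mod_cast this
    · rintro ⟨t, ht⟩
      refine ⟨-t, ?_⟩
      have hq' : (q : ℤ) = (d : ℤ) * m := by exact_mod_cast hdm.symm
      have hyz : (y : ℤ) = (m : ℤ) * t := by exact_mod_cast ht
      rw [hq', hyz]; ring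
  -- final: cast helpers
  have hdmC : (d : ℂ) * m = q := by exact_mod_cast hdm
  have hqC : (q : ℂ) ≠ 0 := Nat.cast_ne_zero.2 hq0
  have hdC : (d : ℂ) ≠ 0 := Nat.cast_ne_zero.2 hd0
  have hmC : (m : ℂ) ≠ 0 := Nat.cast_ne_zero.2 hm0
  have hzm : (ζ ^ (m : ℤ)) ^ (-(c : ℤ) * y) = ζ ^ (-((m * c : ℕ) : ℤ) * y) := by
    rw [← zpow_mul]
    congr 1
    push_cast
    ring
  rw [hsplit, hS2, hre, hgeo]
  by_cases hcase : m ∣ y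
  · rw [if_pos hcase]
    have hw1 : (ζ ^ (-(d : ℤ) * y)) = 1 := hweq.2 hcase
    rw [hw1]
    simp only [one_pow, Finset.sum_const, Finset.card_range, nsmul_eq_mul]
    rw [hzm]
    set A := ζ ^ (-(c : ℤ) * (y : ℤ)) with hA
    set B := ζ ^ (-((m * c : ℕ) : ℤ) * (y : ℤ)) with hB
    have hq' : (q : ℂ) = (d : ℂ) * m := hdmC.symm
    rw [hq']
    field_simp
  · rw [if_neg hcase]
    have hwne : (ζ ^ (-(d : ℤ) * y)) ≠ 1 := fun h => hcase (hweq.1 h)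
    rw [geom_sum_eq hwne, hwm]
    rw [hzm]
    set B := ζ ^ (-((m * c : ℕ) : ℤ) * (y : ℤ)) with hB
    ring
end
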